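/- (ε-net extension.) Let A be an n×m real matrix, p ∈ [1,∞), 0 < ε ≤ 1/7, and let S be any real matrix with n columns. Let B = {Ax : x ∈ ℝ^m, ‖Ax‖_p ≤ 1} and let N ⊆ B be an (ε/4)-net of B, i.e., for every y ∈ B there exists y' ∈ N with ‖y − y'‖_p ≤ ε/4. Suppose that for every y' ∈ N one has |‖Sy'‖_p − ‖y'‖_p| ≤ (ε/4)·‖y'‖_p. Then for every x ∈ ℝ^m: |‖SAx‖_p − ‖Ax‖_p| ≤ ε·‖Ax‖_p. -/

import Mathlib

open scoped BigOperators

/-- The entrywise `p`-norm of a vector: `(∑ i, |v i| ^ p) ^ (1/p)`. -/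
noncomputable def pnorm (p : ℝ) {n : ℕ} (v : Fin n → ℝ) : ℝ :=
  (∑ i, |v i| ^ p) ^ (1 / p)

/-- The dual norm of the `p`-norm: the max-norm if `p = 1`, else the `p/(p-1)`-norm. -/
noncomputable def qnorm (p : ℝ) {n : ℕ} (v : Fin n → ℝ) : ℝ :=
  if p = 1 then ⨆ i, |v i| else pnorm (p / (p - 1)) v

/-- The entrywise `p`-norm of a matrix. -/
noncomputable def mpnorm (p : ℝ) {n d : ℕ} (M : Matrix (Fin n) (Fin d) ℝ) : ℝ :=
  (∑ i, ∑ j, |M i j| ^ p) ^ (1 / p)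

/-- `U` is an `(α, β, p)`-well-conditioned basis for the column space of `A`. -/
def IsWCB (p α β : ℝ) {n m d : ℕ} (A : Matrix (Fin n) (Fin m) ℝ)
    (U : Matrix (Fin n) (Fin d) ℝ) : Prop :=
  LinearMap.range U.mulVecLin = LinearMap.range A.mulVecLin ∧
  mpnorm p U ≤ α ∧
  ∀ z : Fin d → ℝ, qnorm p z ≤ β * pnorm p (U.mulVec z)

/-- `S : Ω → Matrix` is a random `n × n` diagonal sampling matrix with probabilities `pr`:
its diagonal entries are mutually independent, with `S ω i i = (pr i) ^ (-1/p)` with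
probability `pr i` and `S ω i i = 0` with probability `1 - pr i`. -/
structure IsSamplingMatrix {Ω : Type} [MeasurableSpace Ω] (μ : MeasureTheory.Measure Ω)
    (p : ℝ) {n : ℕ} (pr : Fin n → ℝ) (S : Ω → Matrix (Fin n) (Fin n) ℝ) : Prop where
  offdiag : ∀ ω i j, i ≠ j → S ω i j = 0
  meas : ∀ i, Measurable fun ω => S ω i i
  prob_val : ∀ i, μ {ω | S ω i i = (pr i) ^ (-(1 / p))} = ENNReal.ofReal (pr i)
  prob_zero : ∀ i, μ {ω | S ω i i = 0} = ENNReal.ofReal (1 - pr i)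
  indep : ProbabilityTheory.iIndepFun (fun i ω => S ω i i) μ

lemma pnorm_nonneg (p : ℝ) {d : ℕ} (v : Fin d → ℝ) : 0 ≤ pnorm p v :=
  Real.rpow_nonneg (Finset.sum_nonneg fun i _ => Real.rpow_nonneg (abs_nonneg _) _) _

lemma pnorm_smul {p : ℝ} (hp : 1 ≤ p) {d : ℕ} (c : ℝ) (v : Fin d → ℝ) :
    pnorm p (c • v) = |c| * pnorm p v := by
  have hp0 : p ≠ 0 := by positivity
  unfold pnorm
  have h1 : ∀ i : Fin d, |(c • v) i| ^ p = |c| ^ p * |v i| ^ p := fun i => by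
    simp [Pi.smul_apply, smul_eq_mul, abs_mul, Real.mul_rpow (abs_nonneg _) (abs_nonneg _)]
  rw [Finset.sum_congr rfl fun i _ => h1 i, ← Finset.mul_sum,
    Real.mul_rpow (Real.rpow_nonneg (abs_nonneg _) _)
      (Finset.sum_nonneg fun i _ => Real.rpow_nonneg (abs_nonneg _) _),
    ← Real.rpow_mul (abs_nonneg c), mul_one_div, div_self hp0, Real.rpow_one]

lemma pnorm_add_le {p : ℝ} (hp : 1 ≤ p) {d : ℕ} (u v : Fin d → ℝ) :
    pnorm p (u + v) ≤ pnorm p u + pnorm p v := by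
  simpa [pnorm] using Real.Lp_add_le Finset.univ u v hp

lemma pnorm_neg (p : ℝ) {d : ℕ} (v : Fin d → ℝ) : pnorm p (-v) = pnorm p v := by
  simp [pnorm]

lemma abs_pnorm_sub_le {p : ℝ} (hp : 1 ≤ p) {d : ℕ} (u v : Fin d → ℝ) :
    |pnorm p u - pnorm p v| ≤ pnorm p (u - v) := by
  rw [abs_sub_le_iff]
  constructor
  · have := pnorm_add_le hp (u - v) v
    simp only [sub_add_cancel] at this
    linarith
  · have := pnorm_add_le hp (v - u) u
    simp only [sub_add_cancel] at this
    rw [show v - u = -(u - v) by ring, pnorm_neg] at this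
    linarith

lemma pnorm_eq_zero {p : ℝ} (hp : 1 ≤ p) {d : ℕ} {v : Fin d → ℝ} (h : pnorm p v = 0) :
    v = 0 := by
  have hp0 : p ≠ 0 := by positivity
  unfold pnorm at h
  have hs : (∑ i, |v i| ^ p) = 0 := by
    by_contra hne
    have hpos : 0 < ∑ i, |v i| ^ p :=
      lt_of_le_of_ne (Finset.sum_nonneg fun i _ => Real.rpow_nonneg (abs_nonneg _) _)
        (Ne.symm hne)
    have := Real.rpow_pos_of_pos hpos (1 / p)
    linarith [h ▸ this]
  funext i
  have := (Finset.sum_eq_zero_iff_of_nonneg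
    (fun i _ => Real.rpow_nonneg (abs_nonneg (v i)) p)).1 hs i (Finset.mem_univ i)
  have habs : |v i| = 0 := by
    by_contra hne
    have hlt : 0 < |v i| := lt_of_le_of_ne (abs_nonneg _) (Ne.symm hne)
    exact absurd this (ne_of_gt (Real.rpow_pos_of_pos hlt p))
  simpa using abs_eq_zero.1 habs

lemma coord_le_pnorm {p : ℝ} (hp : 1 ≤ p) {d : ℕ} (v : Fin d → ℝ) (i : Fin d) :
    |v i| ≤ pnorm p v := by
  have hp0 : 0 < p := lt_of_lt_of_le one_pos hp
  have h1 : |v i| ^ p ≤ ∑ j, |v j| ^ p :=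
    Finset.single_le_sum (fun j _ => Real.rpow_nonneg (abs_nonneg _) _) (Finset.mem_univ i)
  have := Real.rpow_le_rpow (Real.rpow_nonneg (abs_nonneg _) _) h1 (by positivity : (0:ℝ) ≤ 1/p)
  rwa [← Real.rpow_mul (abs_nonneg _), mul_one_div, div_self hp0.ne', Real.rpow_one] at this

lemma exists_opnorm {p : ℝ} (hp : 1 ≤ p) {k n : ℕ} (S : Matrix (Fin k) (Fin n) ℝ) :
    ∃ C : ℝ, 0 < C ∧ ∀ w : Fin n → ℝ, pnorm p (S.mulVec w) ≤ C * pnorm p w := by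
  have hp0 : 0 < p := lt_of_lt_of_le one_pos hp
  set R : Fin k → ℝ := fun i => ∑ j, |S i j| with hR
  refine ⟨(∑ i, R i ^ p) ^ (1 / p) + 1, by positivity, fun w => ?_⟩
  set M := pnorm p w with hM
  have hM0 : 0 ≤ M := pnorm_nonneg p w
  have hRi : ∀ i, 0 ≤ R i := fun i => Finset.sum_nonneg fun j _ => abs_nonneg _
  have hco : ∀ i, |S.mulVec w i| ≤ R i * M := by
    intro i
    calc |S.mulVec w i| = |∑ j, S i j * w j| := by rfl
      _ ≤ ∑ j, |S i j * w j| := Finset.abs_sum_le_sum_abs _ _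
      _ ≤ ∑ j, |S i j| * M := by
          refine Finset.sum_le_sum fun j _ => ?_
          rw [abs_mul]
          exact mul_le_mul_of_nonneg_left (coord_le_pnorm hp w j) (abs_nonneg _)
      _ = R i * M := by rw [hR, Finset.sum_mul]
  have hsum : (∑ i, |S.mulVec w i| ^ p) ≤ ∑ i, (R i * M) ^ p :=
    Finset.sum_le_sum fun i _ => Real.rpow_le_rpow (abs_nonneg _) (hco i) hp0.le
  have h2 : pnorm p (S.mulVec w) ≤ (∑ i, (R i * M) ^ p) ^ (1/p) :=
    Real.rpow_le_rpow (Finset.sum_nonneg fun i _ => Real.rpow_nonneg (abs_nonneg _) _)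
      hsum (by positivity)
  have h3 : (∑ i, (R i * M) ^ p) = (∑ i, R i ^ p) * M ^ p := by
    rw [Finset.sum_mul]
    exact Finset.sum_congr rfl fun i _ => Real.mul_rpow (hRi i) hM0
  rw [h3, Real.mul_rpow (Finset.sum_nonneg fun i _ => Real.rpow_nonneg (hRi i) _)
      (Real.rpow_nonneg hM0 _), ← Real.rpow_mul hM0, mul_one_div, div_self hp0.ne',
      Real.rpow_one] at h2
  calc pnorm p (S.mulVec w) ≤ (∑ i, R i ^ p) ^ (1/p) * M := h2
    _ ≤ ((∑ i, R i ^ p) ^ (1/p) + 1) * M := by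
        apply mul_le_mul_of_nonneg_right _ hM0
        linarith

lemma pnorm_zero {p : ℝ} (hp : 1 ≤ p) {d : ℕ} : pnorm p (0 : Fin d → ℝ) = 0 := by
  have hp0 : p ≠ 0 := by positivity
  simp [pnorm, Real.zero_rpow hp0, Real.zero_rpow (inv_ne_zero hp0)]

/-- **ε-net extension step.**
Let `A` be `n × m`, `p ∈ [1, ∞)`, `0 < ε ≤ 1/7`, and let `S` be any real matrix with `n`
columns.  Let `B = {A x : ‖A x‖_p ≤ 1}` and let `N ⊆ B` be an `ε/4`-net of `B`.  If
`|‖S y'‖_p - ‖y'‖_p| ≤ (ε/4) ‖y'‖_p` for every `y' ∈ N`, then for every `x ∈ ℝᵐ`,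
`|‖S A x‖_p - ‖A x‖_p| ≤ ε ‖A x‖_p`. -/
theorem eps_net_extension {n m k : ℕ} (A : Matrix (Fin n) (Fin m) ℝ)
    (S : Matrix (Fin k) (Fin n) ℝ) (p ε : ℝ) (N : Set (Fin n → ℝ))
    (hp : 1 ≤ p) (hε : 0 < ε) (hε' : ε ≤ 1 / 7)
    (hNB : ∀ y ∈ N, ∃ x : Fin m → ℝ, y = A.mulVec x ∧ pnorm p y ≤ 1)
    (hnet : ∀ x : Fin m → ℝ, pnorm p (A.mulVec x) ≤ 1 →
      ∃ y' ∈ N, pnorm p (A.mulVec x - y') ≤ ε / 4)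
    (hS : ∀ y' ∈ N, |pnorm p (S.mulVec y') - pnorm p y'| ≤ (ε / 4) * pnorm p y') :
    ∀ x : Fin m → ℝ,
      |pnorm p (S.mulVec (A.mulVec x)) - pnorm p (A.mulVec x)|
        ≤ ε * pnorm p (A.mulVec x) := by
  have ht0 : 0 < ε / 4 := by linarith
  have ht1 : ε / 4 < 1 := by linarith
  obtain ⟨C, hC, hCle⟩ := exists_opnorm hp S
  set D : ℝ := (1 + ε / 4) / (1 - ε / 4) with hD
  have h1me : 0 < 1 - ε / 4 := by linarith
  have hD0 : 0 < D := by positivity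
  have hDeq : D * (1 - ε / 4) = 1 + ε / 4 := div_mul_cancel₀ _ h1me.ne'
  -- scaling helper: bound on pnorm (S.mulVec w) for w = A.mulVec z with small pnorm,
  -- given a bound on unit-ball vectors
  have scale_bound : ∀ (K : ℝ), (∀ x : Fin m → ℝ, pnorm p (A.mulVec x) ≤ 1 →
        pnorm p (S.mulVec (A.mulVec x)) ≤ K) →
      ∀ z : Fin m → ℝ, pnorm p (A.mulVec z) ≤ ε / 4 →
        pnorm p (S.mulVec (A.mulVec z)) ≤ (ε / 4) * K := by
    intro K hK z hz
    have h4e : (0:ℝ) < 4 / ε := by positivity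
    have h1 : A.mulVec ((4 / ε) • z) = (4 / ε) • A.mulVec z := Matrix.mulVec_smul A _ z
    have h2 : pnorm p (A.mulVec ((4 / ε) • z)) ≤ 1 := by
      rw [h1, pnorm_smul hp, abs_of_pos h4e]
      calc 4 / ε * pnorm p (A.mulVec z) ≤ 4 / ε * (ε / 4) :=
            mul_le_mul_of_nonneg_left hz h4e.le
        _ = 1 := by field_simp
    have h3 := hK _ h2
    rw [h1, Matrix.mulVec_smul, pnorm_smul hp, abs_of_pos h4e] at h3
    set P := pnorm p (S.mulVec (A.mulVec z)) with hP
    have := mul_le_mul_of_nonneg_left h3 (le_of_lt ht0)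
    calc P = (ε / 4) * (4 / ε * P) := by field_simp
      _ ≤ (ε / 4) * K := this
  -- key induction
  have key : ∀ j : ℕ, ∀ x : Fin m → ℝ, pnorm p (A.mulVec x) ≤ 1 →
      pnorm p (S.mulVec (A.mulVec x)) ≤ D + C * (ε / 4) ^ j := by
    intro j
    induction j with
    | zero =>
      intro x hx
      have h1 := hCle (A.mulVec x)
      have h2 : C * pnorm p (A.mulVec x) ≤ C * 1 := mul_le_mul_of_nonneg_left hx hC.le
      simp only [pow_zero, mul_one]
      linarith
    | succ j ih =>
      intro x hx
      obtain ⟨y', hy'N, hnear⟩ := hnet x hx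
      obtain ⟨x', hx'eq, hy'le⟩ := hNB y' hy'N
      have hweq : A.mulVec x - y' = A.mulVec (x - x') := by
        rw [hx'eq, Matrix.mulVec_sub]
      have hwle : pnorm p (A.mulVec (x - x')) ≤ ε / 4 := hweq ▸ hnear
      have hSw := scale_bound (D + C * (ε / 4) ^ j) ih (x - x') hwle
      have hsplit : S.mulVec (A.mulVec x) = S.mulVec y' + S.mulVec (A.mulVec (x - x')) := by
        rw [← Matrix.mulVec_add, ← hweq]
        have h : y' + (A.mulVec x - y') = A.mulVec x := by abel
        rw [h]
      have htri : pnorm p (S.mulVec (A.mulVec x)) ≤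
          pnorm p (S.mulVec y') + pnorm p (S.mulVec (A.mulVec (x - x'))) := by
        rw [hsplit]; exact pnorm_add_le hp _ _
      have hSy' : pnorm p (S.mulVec y') ≤ (1 + ε / 4) * pnorm p y' := by
        have := abs_le.1 (hS y' hy'N)
        linarith [this.2]
      have hy'0 : 0 ≤ pnorm p y' := pnorm_nonneg p y'
      have hSy'1 : pnorm p (S.mulVec y') ≤ 1 + ε / 4 := by
        calc pnorm p (S.mulVec y') ≤ (1 + ε / 4) * pnorm p y' := hSy'
          _ ≤ (1 + ε / 4) * 1 := by nlinarith
          _ = 1 + ε / 4 := mul_one _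
      have hpow : (ε / 4) * ((ε / 4) ^ j) = (ε / 4) ^ (j + 1) := (pow_succ' _ _).symm
      have hDstep : 1 + ε / 4 + (ε / 4) * D ≤ D := by nlinarith
      calc pnorm p (S.mulVec (A.mulVec x))
          ≤ (1 + ε / 4) + ((ε / 4) * (D + C * (ε / 4) ^ j)) := by linarith
        _ = (1 + ε / 4 + (ε / 4) * D) + C * (ε / 4) ^ (j + 1) := by ring
        _ ≤ D + C * (ε / 4) ^ (j + 1) := by linarith
  -- pass to the limit
  have key2 : ∀ x : Fin m → ℝ, pnorm p (A.mulVec x) ≤ 1 →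
      pnorm p (S.mulVec (A.mulVec x)) ≤ D := by
    intro x hx
    by_contra hcon
    push_neg at hcon
    set δ := pnorm p (S.mulVec (A.mulVec x)) - D with hδ
    have hδ0 : 0 < δ := sub_pos.mpr hcon
    obtain ⟨j, hj⟩ := exists_pow_lt_of_lt_one (show (0:ℝ) < δ / C by positivity) ht1
    have := key j x hx
    have : C * (ε / 4) ^ j < δ := by
      have := mul_lt_mul_of_pos_left hj hC
      rwa [mul_div_cancel₀ _ hC.ne'] at this
    linarith [key j x hx]
  -- main argument
  intro x
  rcases eq_or_lt_of_le (pnorm_nonneg p (A.mulVec x)) with h0 | hL0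
  · have hA0 : A.mulVec x = 0 := pnorm_eq_zero hp h0.symm
    simp [hA0, Matrix.mulVec_zero, pnorm_zero hp]
  · set L := pnorm p (A.mulVec x) with hL
    have hLi : (0:ℝ) < L⁻¹ := by positivity
    have huA : A.mulVec (L⁻¹ • x) = L⁻¹ • A.mulVec x := Matrix.mulVec_smul A _ x
    have hu1 : pnorm p (A.mulVec (L⁻¹ • x)) = 1 := by
      rw [huA, pnorm_smul hp, abs_of_pos hLi, ← hL, inv_mul_cancel₀ hL0.ne']
    obtain ⟨y', hy'N, hnear⟩ := hnet (L⁻¹ • x) hu1.le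
    obtain ⟨x', hx'eq, hy'le⟩ := hNB y' hy'N
    set u := A.mulVec (L⁻¹ • x) with hu
    have hweq : u - y' = A.mulVec (L⁻¹ • x - x') := by
      rw [hu, hx'eq, Matrix.mulVec_sub]
    have hwle : pnorm p (A.mulVec (L⁻¹ • x - x')) ≤ ε / 4 := hweq ▸ hnear
    have hSw : pnorm p (S.mulVec (A.mulVec (L⁻¹ • x - x'))) ≤ (ε / 4) * D :=
      scale_bound D key2 _ hwle
    -- bounds on pnorm y'
    have hy'near : |pnorm p u - pnorm p y'| ≤ ε / 4 :=
      le_trans (abs_pnorm_sub_le hp u y') hnear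
    rw [hu1] at hy'near
    have hy'lb := (abs_le.1 hy'near).2
    have hy'ub := (abs_le.1 hy'near).1
    -- |pnorm (S u) - pnorm (S y')| ≤ pnorm (S w)
    have hSdiff : S.mulVec u - S.mulVec y' = S.mulVec (A.mulVec (L⁻¹ • x - x')) := by
      rw [← Matrix.mulVec_sub, hweq]
    have hSu : |pnorm p (S.mulVec u) - pnorm p (S.mulVec y')| ≤ (ε / 4) * D := by
      calc |pnorm p (S.mulVec u) - pnorm p (S.mulVec y')|
          ≤ pnorm p (S.mulVec u - S.mulVec y') := abs_pnorm_sub_le hp _ _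
        _ = pnorm p (S.mulVec (A.mulVec (L⁻¹ • x - x'))) := by rw [hSdiff]
        _ ≤ (ε / 4) * D := hSw
    have hSy' := abs_le.1 (hS y' hy'N)
    have hSu' := abs_le.1 hSu
    have hy'0 : 0 ≤ pnorm p y' := pnorm_nonneg p y'
    -- |pnorm (S u) - 1| ≤ ε
    have hmain : |pnorm p (S.mulVec u) - 1| ≤ ε := by
      rw [abs_le]
      constructor
      · nlinarith [hSy'.1, hSu'.1]
      · nlinarith [hSy'.2, hSu'.2]
    -- scale back
    have hAx : A.mulVec x = L • u := by
      rw [huA, smul_smul, mul_inv_cancel₀ hL0.ne', one_smul]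
    have hfinal : pnorm p (S.mulVec (A.mulVec x)) = L * pnorm p (S.mulVec u) := by
      rw [hAx, Matrix.mulVec_smul, pnorm_smul hp, abs_of_pos hL0]
    rw [hfinal]
    calc |L * pnorm p (S.mulVec u) - L| = L * |pnorm p (S.mulVec u) - 1| := by
          rw [show L * pnorm p (S.mulVec u) - L = L * (pnorm p (S.mulVec u) - 1) by ring,
            abs_mul, abs_of_pos hL0]
      _ ≤ L * ε := mul_le_mul_of_nonneg_left hmain hL0.le
      _ = ε * L := mul_comm _ _
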